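/- Let σ be a PSD operator on a finite-dimensional Hilbert space with support projection Π_σ, and let P be an orthogonal projection with PΠ_σ = P. Then the minimum of ‖ψ / Tr(ψσ)‖_∞ over all density operators ψ invariant under the projection I − Π_σ + P equals 1 / Tr(Pσ), and the minimum is achieved at ψ = P / Tr(P). -/

import Mathlib

open Matrix
open scoped ComplexOrder

/-- `P` is an orthogonal projection matrix. -/
def IsOrthProj {n : ℕ} (P : Matrix (Fin n) (Fin n) ℂ) : Prop :=
  P.IsHermitian ∧ P * P = P

/-- `P` is the orthogonal projection onto the range (support) of `ν`. -/
def IsSupportProj {n : ℕ} (ν P : Matrix (Fin n) (Fin n) ℂ) : Prop :=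
  IsOrthProj P ∧ LinearMap.range P.mulVecLin = LinearMap.range ν.mulVecLin

section Aux
variable {n : ℕ}

lemma aux_ext_mulVec {A B : Matrix (Fin n) (Fin n) ℂ}
    (h : ∀ v, A *ᵥ v = B *ᵥ v) : A = B := by
  ext i j
  have := congr_fun (h (Pi.single j 1)) i
  simpa [mulVec_single] using this

lemma aux_trace_psd_nonneg {A : Matrix (Fin n) (Fin n) ℂ} (hA : A.PosSemidef) :
    0 ≤ A.trace := by
  rw [Matrix.trace]
  refine Finset.sum_nonneg fun i _ => ?_
  simpa [Matrix.mulVec_single, dotProduct, Pi.single_apply] using hA.dotProduct_mulVec_nonneg (Pi.single i 1)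

open scoped MatrixOrder in
lemma aux_trace_mul_psd_nonneg {A B : Matrix (Fin n) (Fin n) ℂ}
    (hA : A.PosSemidef) (hB : B.PosSemidef) : 0 ≤ (A * B).trace := by
  have h1 : A = CFC.sqrt A * CFC.sqrt A := (CFC.sqrt_mul_sqrt_self A hA.nonneg).symm
  have h2 : (CFC.sqrt A * B * CFC.sqrt A).trace = (A * B).trace := by
    rw [Matrix.trace_mul_cycle, ← h1]
  rw [← h2]
  have h3 : (CFC.sqrt A * B * (CFC.sqrt A)ᴴ).PosSemidef := hB.mul_mul_conjTranspose_same _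
  rw [(Matrix.nonneg_iff_posSemidef.mp (CFC.sqrt_nonneg A)).isHermitian.eq] at h3
  exact aux_trace_psd_nonneg h3

lemma aux_hasEigenvalue_eigenvalues {A : Matrix (Fin n) (Fin n) ℂ} (hA : A.IsHermitian)
    (i : Fin n) : Module.End.HasEigenvalue A.mulVecLin ((hA.eigenvalues i : ℝ) : ℂ) := by
  apply Module.End.hasEigenvalue_of_hasEigenvector (x := ⇑(hA.eigenvectorBasis i))
  refine ⟨?_, ?_⟩
  · rw [Module.End.mem_eigenspace_iff, Matrix.mulVecLin_apply, hA.mulVec_eigenvectorBasis]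
    ext j
    simp [Complex.real_smul]
  · exact fun h => hA.eigenvectorBasis.orthonormal.ne_zero i (by ext j; exact congr_fun h j)

lemma aux_smul_one_sub_psd {A : Matrix (Fin n) (Fin n) ℂ} (hA : A.IsHermitian) {m : ℝ}
    (h : ∀ i, hA.eigenvalues i ≤ m) : ((m : ℂ) • 1 - A).PosSemidef := by
  set U : Matrix (Fin n) (Fin n) ℂ := (hA.eigenvectorUnitary : Matrix (Fin n) (Fin n) ℂ)
  have hU : U * star U = 1 := (Matrix.mem_unitaryGroup_iff).mp hA.eigenvectorUnitary.2
  have key : (m : ℂ) • 1 - A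
      = U * diagonal (fun i => (m : ℂ) - (hA.eigenvalues i : ℝ)) * Uᴴ := by
    have hd : diagonal (fun i => (m : ℂ) - ((hA.eigenvalues i : ℝ) : ℂ))
        = (m : ℂ) • 1 - diagonal (RCLike.ofReal ∘ hA.eigenvalues) := by
      rw [Matrix.smul_one_eq_diagonal, Matrix.diagonal_sub]
      rfl
    rw [hd, Matrix.mul_sub, Matrix.sub_mul, Matrix.mul_smul, Matrix.smul_mul, mul_one,
      ← Matrix.star_eq_conjTranspose, hU]
    congr 1
    exact hA.spectral_theorem.trans (Unitary.conjStarAlgAut_apply _ _)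
  rw [key]
  refine Matrix.PosSemidef.mul_mul_conjTranspose_same ?_ U
  refine Matrix.posSemidef_diagonal_iff.mpr fun i => ?_
  have : ((m - hA.eigenvalues i : ℝ) : ℂ) = (m : ℂ) - (hA.eigenvalues i : ℝ) := by push_cast; ring
  rw [← this]
  exact_mod_cast Complex.zero_le_real.mpr (by linarith [h i])

end Aux

theorem stmt_13 {n : ℕ} (σ : Matrix (Fin n) (Fin n) ℂ) (hσ : σ.PosSemidef)
    (Psig : Matrix (Fin n) (Fin n) ℂ) (hPsig : IsSupportProj σ Psig)
    (P : Matrix (Fin n) (Fin n) ℂ) (hP : IsOrthProj P) (hPsub : P * Psig = P)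
    (hpos : 0 < ((P * σ).trace).re) :
    IsLeast
      {c : ℝ | ∃ (ψ : Matrix (Fin n) (Fin n) ℂ) (m : ℝ),
        ψ.PosSemidef ∧ ψ.trace = 1 ∧
        (1 - Psig + P) * ψ * (1 - Psig + P) = ψ ∧
        0 < ((ψ * σ).trace).re ∧
        IsGreatest {r : ℝ | Module.End.HasEigenvalue ψ.mulVecLin (r : ℂ)} m ∧
        c = m / ((ψ * σ).trace).re}
      (1 / ((P * σ).trace).re) ∧
    (∃ m : ℝ,
      IsGreatest {r : ℝ |
        Module.End.HasEigenvalue ((P.trace)⁻¹ • P).mulVecLin (r : ℂ)} m ∧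
      m / ((((P.trace)⁻¹ • P) * σ).trace).re = 1 / ((P * σ).trace).re) := by
  obtain ⟨hPherm, hPidem⟩ := hP
  obtain ⟨⟨hSherm, hSidem⟩, hSrange⟩ := hPsig
  -- basic algebraic facts
  have hSσ : Psig * σ = σ := by
    apply aux_ext_mulVec
    intro v
    have hv : σ *ᵥ v ∈ LinearMap.range Psig.mulVecLin := by
      rw [hSrange]; exact ⟨v, rfl⟩
    obtain ⟨w, hw⟩ := hv
    rw [Matrix.mulVecLin_apply] at hw
    rw [← Matrix.mulVec_mulVec, ← hw, Matrix.mulVec_mulVec, hSidem, hw]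
  have hσS : σ * Psig = σ := by
    have h := congrArg Matrix.conjTranspose hSσ
    rwa [Matrix.conjTranspose_mul, hSherm.eq, hσ.isHermitian.eq] at h
  have hSP : Psig * P = P := by
    have h := congrArg Matrix.conjTranspose hPsub
    rwa [Matrix.conjTranspose_mul, hSherm.eq, hPherm.eq] at h
  have hQσ : (1 - Psig + P) * σ = P * σ := by
    rw [add_mul, sub_mul, one_mul, hSσ, sub_self, zero_add]
  have hσQ : σ * (1 - Psig + P) = σ * P := by
    rw [mul_add, mul_sub, mul_one, hσS, sub_self, zero_add]
  have hQP : (1 - Psig + P) * P = P := by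
    rw [add_mul, sub_mul, one_mul, hSP, sub_self, zero_add, hPidem]
  have hPQ : P * (1 - Psig + P) = P := by
    rw [mul_add, mul_sub, mul_one, hPsub, sub_self, zero_add, hPidem]
  have hPpsd : P.PosSemidef := by
    have h := Matrix.posSemidef_conjTranspose_mul_self P
    rwa [hPherm.eq, hPidem] at h
  have hPσP : (P * σ * P).PosSemidef := by
    have h := hσ.mul_mul_conjTranspose_same P
    rwa [hPherm.eq] at h
  have htrPσP : (P * σ * P).trace = (P * σ).trace := by
    rw [Matrix.trace_mul_cycle, hPidem]
  -- P.trace is a positive real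
  have hPne : P ≠ 0 := by
    rintro rfl
    simp at hpos
  set T : ℝ := ((P * σ).trace).re with hT
  have hPP : P = Pᴴ * P := by rw [hPherm.eq, hPidem]
  have htr_eq : P.trace = ((∑ j, ∑ i, Complex.normSq (P i j) : ℝ) : ℂ) := by
    conv_lhs => rw [hPP]
    rw [Matrix.trace]
    push_cast
    refine Finset.sum_congr rfl fun j _ => ?_
    rw [Matrix.diag_apply, Matrix.mul_apply]
    refine Finset.sum_congr rfl fun i _ => ?_
    rw [Matrix.conjTranspose_apply, Complex.star_def, ← Complex.normSq_eq_conj_mul_self]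
  obtain ⟨i₀, j₀, hij⟩ : ∃ i j, P i j ≠ 0 := by
    by_contra h
    push_neg at h
    exact hPne (by ext i j; exact h i j)
  have htrpos : 0 < (∑ j, ∑ i, Complex.normSq (P i j) : ℝ) := by
    refine Finset.sum_pos' (fun j _ => Finset.sum_nonneg fun i _ => Complex.normSq_nonneg _)
      ⟨j₀, Finset.mem_univ _, ?_⟩
    refine Finset.sum_pos' (fun i _ => Complex.normSq_nonneg _)
      ⟨i₀, Finset.mem_univ _, Complex.normSq_pos.mpr hij⟩
  have htr_re : P.trace.re = (∑ j, ∑ i, Complex.normSq (P i j) : ℝ) := by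
    rw [htr_eq, Complex.ofReal_re]
  have htr_repos : 0 < P.trace.re := htr_re ▸ htrpos
  have htr_real : P.trace = ((P.trace.re : ℝ) : ℂ) := by
    conv_rhs => rw [htr_re]
    exact htr_eq
  have htr_ne : P.trace ≠ 0 := by
    intro h
    rw [h] at htr_repos
    simp at htr_repos
  set c : ℝ := (P.trace.re)⁻¹ with hc
  have hcpos : 0 < c := inv_pos.mpr htr_repos
  have hψ₀ : (P.trace)⁻¹ • P = (c : ℂ) • P := by
    conv_lhs => rw [htr_real]
    rw [← Complex.ofReal_inv, hc]
  -- the greatest eigenvalue of ψ₀ is c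
  have hgr : IsGreatest {r : ℝ |
      Module.End.HasEigenvalue ((P.trace)⁻¹ • P).mulVecLin (r : ℂ)} c := by
    constructor
    · -- c is an eigenvalue: take v in range of P
      obtain ⟨v0, hv0⟩ : ∃ v, P *ᵥ v ≠ 0 := by
        by_contra h
        push_neg at h
        exact hPne (aux_ext_mulVec (A := P) (B := 0) (by simpa using h))
      refine Module.End.hasEigenvalue_of_hasEigenvector (x := P *ᵥ v0) ⟨?_, hv0⟩
      rw [Module.End.mem_eigenspace_iff, Matrix.mulVecLin_apply, hψ₀,
        Matrix.smul_mulVec, Matrix.mulVec_mulVec, hPidem]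
    · rintro r hr
      obtain ⟨v, hv1, hv2⟩ := hr.exists_hasEigenvector
      rw [Module.End.mem_eigenspace_iff, Matrix.mulVecLin_apply, hψ₀,
        Matrix.smul_mulVec] at hv1
      by_cases hr0 : r = 0
      · rw [hr0]; exact le_of_lt hcpos
      · have hrC : (r : ℂ) ≠ 0 := by exact_mod_cast hr0
        have h2 : (c : ℂ) • (P *ᵥ (P *ᵥ v)) = (r : ℂ) • (P *ᵥ v) := by
          rw [← Matrix.mulVec_smul, hv1, Matrix.mulVec_smul]
        rw [Matrix.mulVec_mulVec, hPidem] at h2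
        have h3 : (r : ℂ) • v = (r : ℂ) • (P *ᵥ v) := by rw [← hv1, h2]
        have h4 : v = P *ᵥ v := smul_right_injective _ hrC h3
        rw [← h4] at hv1
        have h5 : ((c : ℂ) - r) • v = 0 := by rw [sub_smul, hv1, sub_self]
        rcases smul_eq_zero.mp h5 with h | h
        · have hcr : (c : ℂ) = r := sub_eq_zero.mp h
          have : c = r := by exact_mod_cast hcr
          exact le_of_eq this.symm
        · exact absurd h hv2
  -- trace of (P σ) is the real number T
  have hPσreal : (P * σ).trace = ((T : ℝ) : ℂ) := by
    have h1 : (starRingEnd ℂ) ((P * σ * P).trace) = (P * σ * P).trace := by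
      conv_rhs => rw [← hPσP.isHermitian.eq, Matrix.trace_conjTranspose]
      rfl
    have h2 := Complex.conj_eq_iff_re.mp h1
    rw [← htrPσP, ← h2, htrPσP]
  have htrace_ψ₀σ_re : ((((P.trace)⁻¹ • P) * σ).trace).re = c * T := by
    rw [hψ₀, Matrix.smul_mul, Matrix.trace_smul, hPσreal, smul_eq_mul,
      ← Complex.ofReal_mul, Complex.ofReal_re]
  have hcT : c / (c * T) = 1 / T := by
    rw [div_eq_div_iff (by positivity) hpos.ne']
    ring
  have hψ₀psd : ((P.trace)⁻¹ • P).PosSemidef := by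
    rw [hψ₀]
    refine .of_dotProduct_mulVec_nonneg ?_ fun x => ?_
    · unfold Matrix.IsHermitian
      rw [Matrix.conjTranspose_smul, hPherm.eq, Complex.star_def, Complex.conj_ofReal]
    · rw [Matrix.smul_mulVec, dotProduct_smul, smul_eq_mul]
      exact mul_nonneg (Complex.zero_le_real.mpr hcpos.le) (hPpsd.dotProduct_mulVec_nonneg x)
  have hψ₀tr : ((P.trace)⁻¹ • P).trace = 1 := by
    rw [Matrix.trace_smul, smul_eq_mul, inv_mul_cancel₀ htr_ne]
  have hψ₀inv : (1 - Psig + P) * ((P.trace)⁻¹ • P) * (1 - Psig + P) = (P.trace)⁻¹ • P := by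
    rw [Matrix.mul_smul, Matrix.smul_mul, hQP, hPQ]
  have hψ₀pos : 0 < ((((P.trace)⁻¹ • P) * σ).trace).re := by
    rw [htrace_ψ₀σ_re]; exact mul_pos hcpos hpos
  constructor
  · constructor
    · exact ⟨(P.trace)⁻¹ • P, c, hψ₀psd, hψ₀tr, hψ₀inv, hψ₀pos, hgr,
        by rw [htrace_ψ₀σ_re]; exact hcT.symm⟩
    · rintro x ⟨ψ, m, hpsd, htr1, hinv, htpos, hgreat, rfl⟩
      have hherm := hpsd.1
      have hbound : ∀ i, hherm.eigenvalues i ≤ m := fun i =>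
        hgreat.2 (aux_hasEigenvalue_eigenvalues hherm i)
      have hsub := aux_smul_one_sub_psd hherm hbound
      have h0 := aux_trace_mul_psd_nonneg hsub hPσP
      have key : (ψ * σ).trace = (ψ * (P * σ * P)).trace := by
        conv_lhs => rw [← hinv]
        rw [mul_assoc ((1 - Psig + P) * ψ) (1 - Psig + P) σ, hQσ,
          Matrix.trace_mul_cycle, mul_assoc P σ (1 - Psig + P), hσQ, ← mul_assoc,
          Matrix.trace_mul_comm]
      have h1 : ((m : ℂ) • 1 - ψ) * (P * σ * P)
          = (m : ℂ) • (P * σ * P) - ψ * (P * σ * P) := by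
        rw [Matrix.sub_mul, Matrix.smul_mul, one_mul]
      rw [h1, Matrix.trace_sub, Matrix.trace_smul, htrPσP, hPσreal] at h0
      have h3 : ((ψ * (P * σ * P)).trace).re ≤ m * T := by
        have h2 := (Complex.le_def.mp h0).1
        simp only [Complex.zero_re, Complex.sub_re, smul_eq_mul, ← Complex.ofReal_mul,
          Complex.ofReal_re] at h2
        linarith
      have h4 : ((ψ * σ).trace).re ≤ m * T := by rw [key]; exact h3
      rw [div_le_div_iff₀ hpos htpos]
      linarith
  · exact ⟨c, hgr, by rw [htrace_ψ₀σ_re]; exact hcT⟩
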